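/- For every cubic graph G with vertex ordering v_1,…,v_n (n ≥ 4) and edge ordering e_1,…,e_m, and all positive integers p, q, p', q', the reduction graph G' is a permutation graph. -/

import Mathlib

/-- The vertices of the reduction graph `G'`: for each `i ∈ [n]` a `(p,q)`-grained
gadget `H_i` with parts `K'_i` (`vK1`), `K''_i` (`vK2`), `S'_i` (`vS1`), `S''_i` (`vS2`);
for each `j ∈ [m]` a `(p',q')`-grained gadget `E_j` with parts `K'ᵉ_j` (`eK1`),
`K''ᵉ_j` (`eK2`), `S'ᵉ_j` (`eS1`), `S''ᵉ_j` (`eS2`); and for each `j ∈ [m]` four link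
vertices `link lr s j`, where `lr = false` selects the smaller endpoint index of the
edge `e_j` and `lr = true` the larger one, and `s` distinguishes `L¹` (`s = false`)
from `L²` (`s = true`). -/
inductive RVert (n m p q p' q' : ℕ) : Type where
  | vK1 : Fin n → Fin q → RVert n m p q p' q'
  | vK2 : Fin n → Fin q → RVert n m p q p' q'
  | vS1 : Fin n → Fin p → RVert n m p q p' q'
  | vS2 : Fin n → Fin p → RVert n m p q p' q'
  | eK1 : Fin m → Fin q' → RVert n m p q p' q'
  | eK2 : Fin m → Fin q' → RVert n m p q p' q'
  | eS1 : Fin m → Fin p' → RVert n m p q p' q'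
  | eS2 : Fin m → Fin p' → RVert n m p q p' q'
  | link : Bool → Bool → Fin m → RVert n m p q p' q'
  deriving DecidableEq

/-- Given the two endpoint functions `ep1 ep2 : Fin m → Fin n` of the ordered edges
(`ep1 j < ep2 j`), the vertex index associated with the link vertex `link lr s j`. -/
def linkIdx {n m : ℕ} (ep1 ep2 : Fin m → Fin n) (lr : Bool) (j : Fin m) : Fin n :=
  if lr then ep2 j else ep1 j

/-- One-directional description of the adjacencies of the reduction graph `G'`. -/
def radj {n m p q p' q' : ℕ} (ep1 ep2 : Fin m → Fin n) :
    RVert n m p q p' q' → RVert n m p q p' q' → Prop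
  | .vK1 i _, .vK1 i' _ => i = i'
  | .vK1 i _, .vK2 i' _ => i = i'
  | .vK2 i _, .vK2 i' _ => i = i'
  | .vK1 i _, .vS1 i' _ => i = i'
  | .vK2 i _, .vS2 i' _ => i = i'
  | .eK1 j _, .eK1 j' _ => j = j'
  | .eK1 j _, .eK2 j' _ => j = j'
  | .eK2 j _, .eK2 j' _ => j = j'
  | .eK1 j _, .eS1 j' _ => j = j'
  | .eK2 j _, .eS2 j' _ => j = j'
  | .link lr _ j, .vK1 k _ => linkIdx ep1 ep2 lr j < k
  | .link lr _ j, .vK2 k _ => linkIdx ep1 ep2 lr j ≤ k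
  | .link lr _ j, .vS1 k _ => linkIdx ep1 ep2 lr j < k
  | .link lr _ j, .vS2 k _ => linkIdx ep1 ep2 lr j < k
  | .link _ _ j, .eK1 l _ => l ≤ j
  | .link _ _ j, .eK2 l _ => l < j
  | .link lr _ j, .eS1 l _ => l < j ∨ (l = j ∧ lr = false)
  | .link _ _ j, .eS2 l _ => l < j
  | .link lr _ j, .link lr' _ l =>
      (linkIdx ep1 ep2 lr j < linkIdx ep1 ep2 lr' l ∧ l ≤ j) ∨
      (linkIdx ep1 ep2 lr' l < linkIdx ep1 ep2 lr j ∧ j ≤ l) ∨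
      (linkIdx ep1 ep2 lr j = linkIdx ep1 ep2 lr' l ∧ j = l)
  | _, _ => False

/-- The reduction graph `G'`. -/
def reductionGraph (n m p q p' q' : ℕ) (ep1 ep2 : Fin m → Fin n) :
    SimpleGraph (RVert n m p q p' q') where
  Adj u v := u ≠ v ∧ (radj ep1 ep2 u v ∨ radj ep1 ep2 v u)
  symm := ⟨fun u v h => ⟨h.1.symm, h.2.symm⟩⟩
  loopless := ⟨fun u h => h.1 rfl⟩


/-- `G` is a permutation graph. -/
def IsPermutationGraph {V : Type} (G : SimpleGraph V) : Prop :=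
  ∃ o1 o2 : LinearOrder V, ∀ u v : V, u ≠ v →
    (G.Adj u v ↔ ((o1.lt u v ∧ o2.lt v u) ∨ (o1.lt v u ∧ o2.lt u v)))

abbrev PGLKey : Type := Lex (ℤ × Lex (ℤ × Lex (ℤ × Lex (ℤ × ℤ))))

def pgEmb (x : ℤ × ℤ × ℤ × ℤ × ℤ) : PGLKey :=
  toLex (x.1, toLex (x.2.1, toLex (x.2.2.1, toLex (x.2.2.2.1, x.2.2.2.2))))

def pgLex5 : (ℤ × ℤ × ℤ × ℤ × ℤ) → (ℤ × ℤ × ℤ × ℤ × ℤ) → Prop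
  | (a, b, c, d, e), (a', b', c', d', e') =>
      a < a' ∨ a = a' ∧ (b < b' ∨ b = b' ∧ (c < c' ∨ c = c' ∧
        (d < d' ∨ d = d' ∧ e < e')))

theorem pgEmb_lt_iff (x y : ℤ × ℤ × ℤ × ℤ × ℤ) : pgEmb x < pgEmb y ↔ pgLex5 x y := by
  obtain ⟨a, b, c, d, e⟩ := x
  obtain ⟨a', b', c', d', e'⟩ := y
  simp [pgEmb, pgLex5, Prod.Lex.lt_iff]

theorem pgEmb_inj : Function.Injective pgEmb := by
  intro x y h
  obtain ⟨a, b, c, d, e⟩ := x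
  obtain ⟨a', b', c', d', e'⟩ := y
  simpa [pgEmb, Prod.ext_iff] using h

def key1 {n m p q p' q' : ℕ} (ep1 ep2 : Fin m → Fin n) :
    RVert n m p q p' q' → ℤ × ℤ × ℤ × ℤ × ℤ
  | .vK1 i t => (0, (i : ℕ), 0, (t : ℕ), 0)
  | .vS1 i t => (0, (i : ℕ), 1, (t : ℕ), 0)
  | .vS2 i t => (0, (i : ℕ), 2, (t : ℕ), 0)
  | .link lr s j => (0, ((linkIdx ep1 ep2 lr j : Fin n) : ℕ), 3, (j : ℕ), s.toNat)
  | .vK2 i t => (0, (i : ℕ), 4, (t : ℕ), 0)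
  | .eS1 j t => (1, (j : ℕ), 0, (t : ℕ), 0)
  | .eK2 j t => (1, (j : ℕ), 1, -((t : ℕ) : ℤ), 0)
  | .eK1 j t => (1, (j : ℕ), 2, -((t : ℕ) : ℤ), 0)
  | .eS2 j t => (1, (j : ℕ), 3, (t : ℕ), 0)

def key2 {n m p q p' q' : ℕ} :
    RVert n m p q p' q' → ℤ × ℤ × ℤ × ℤ × ℤ
  | .vS1 i t => (0, (i : ℕ), 0, (t : ℕ), 0)
  | .vK2 i t => (0, (i : ℕ), 1, -((t : ℕ) : ℤ), 0)
  | .vK1 i t => (0, (i : ℕ), 2, -((t : ℕ) : ℤ), 0)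
  | .vS2 i t => (0, (i : ℕ), 3, (t : ℕ), 0)
  | .eK1 j t => (1, (j : ℕ), 0, (t : ℕ), 0)
  | .link lr s j => (1, (j : ℕ), (if lr then (1 : ℤ) else 3), (if s then (0 : ℤ) else 1), 0)
  | .eS1 j t => (1, (j : ℕ), 2, (t : ℕ), 0)
  | .eS2 j t => (1, (j : ℕ), 4, (t : ℕ), 0)
  | .eK2 j t => (1, (j : ℕ), 5, (t : ℕ), 0)

theorem key1_inj {n m p q p' q' : ℕ} (ep1 ep2 : Fin m → Fin n) (hlt : ∀ j, ep1 j < ep2 j) :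
    Function.Injective (key1 ep1 ep2 : RVert n m p q p' q' → _) := by
  intro u v h
  rcases u with ⟨i,t⟩|⟨i,t⟩|⟨i,t⟩|⟨i,t⟩|⟨j,t⟩|⟨j,t⟩|⟨j,t⟩|⟨j,t⟩|⟨lr,s,j⟩ <;>
  rcases v with ⟨i',t'⟩|⟨i',t'⟩|⟨i',t'⟩|⟨i',t'⟩|⟨j',t'⟩|⟨j',t'⟩|⟨j',t'⟩|⟨j',t'⟩|⟨lr',s',j'⟩ <;>
    (try cases lr) <;> (try cases lr') <;> (try cases s) <;> (try cases s') <;>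
    simp [key1, linkIdx, Fin.val_inj] at h <;>
    first
      | rfl
      | (obtain ⟨rfl, rfl⟩ := h; rfl)
      | (obtain ⟨h1, rfl⟩ := h; rfl)
      | (obtain rfl := h; rfl)
      | (obtain ⟨h1, rfl⟩ := h; exact absurd h1 (Fin.ne_of_lt (hlt _)))
      | (obtain ⟨h1, rfl⟩ := h; exact absurd h1.symm (Fin.ne_of_lt (hlt _)))

theorem key2_inj {n m p q p' q' : ℕ} :
    Function.Injective (key2 : RVert n m p q p' q' → _) := by
  intro u v h
  rcases u with ⟨i,t⟩|⟨i,t⟩|⟨i,t⟩|⟨i,t⟩|⟨j,t⟩|⟨j,t⟩|⟨j,t⟩|⟨j,t⟩|⟨lr,s,j⟩ <;>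
  rcases v with ⟨i',t'⟩|⟨i',t'⟩|⟨i',t'⟩|⟨i',t'⟩|⟨j',t'⟩|⟨j',t'⟩|⟨j',t'⟩|⟨j',t'⟩|⟨lr',s',j'⟩ <;>
    (try cases lr) <;> (try cases lr') <;> (try cases s) <;> (try cases s') <;>
    simp [key2, Fin.val_inj, Prod.ext_iff] at h <;>
    first
      | rfl
      | (obtain ⟨rfl, rfl⟩ := h; rfl)
      | (obtain rfl := h; rfl)

theorem pg_lift'_lt {α β : Type} [LinearOrder β] (f : α → β) (inj : Function.Injective f)
    (a b : α) : (LinearOrder.lift' f inj).lt a b ↔ f a < f b := Iff.rfl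


set_option maxHeartbeats 2000000 in
/-- the reduction graph `G'` is a permutation graph. -/
theorem reductionGraph_isPermutationGraph (n m : ℕ) (hn : 4 ≤ n) (G : SimpleGraph (Fin n))
    (hcubic : ∀ v : Fin n, (G.neighborSet v).ncard = 3)
    (ep1 ep2 : Fin m → Fin n) (hlt : ∀ j, ep1 j < ep2 j)
    (hedges : ∀ u v : Fin n,
      G.Adj u v ↔ ∃ j, (ep1 j = u ∧ ep2 j = v) ∨ (ep1 j = v ∧ ep2 j = u))
    (hinj : Function.Injective fun j => (ep1 j, ep2 j))
    (p q p' q' : ℕ) (hp : 0 < p) (hq : 0 < q) (hp' : 0 < p') (hq' : 0 < q') :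
    IsPermutationGraph (reductionGraph n m p q p' q' ep1 ep2) := by
  clear hn hcubic hedges hinj hp hq hp' hq' G
  have hk1 : Function.Injective
      (fun v => pgEmb (key1 ep1 ep2 v) : RVert n m p q p' q' → PGLKey) :=
    pgEmb_inj.comp (key1_inj ep1 ep2 hlt)
  have hk2 : Function.Injective
      (fun v => pgEmb (key2 v) : RVert n m p q p' q' → PGLKey) :=
    pgEmb_inj.comp key2_inj
  refine ⟨LinearOrder.lift' _ hk1, LinearOrder.lift' _ hk2, fun u v huv => ?_⟩
  have hadj : (reductionGraph n m p q p' q' ep1 ep2).Adj u v ↔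
      (radj ep1 ep2 u v ∨ radj ep1 ep2 v u) := by
    simp [reductionGraph, huv]
  rw [hadj]
  simp only [pg_lift'_lt, pgEmb_lt_iff]
  rcases u with ⟨i,t⟩|⟨i,t⟩|⟨i,t⟩|⟨i,t⟩|⟨j,t⟩|⟨j,t⟩|⟨j,t⟩|⟨j,t⟩|⟨lr,s,j⟩ <;>
  rcases v with ⟨i',t'⟩|⟨i',t'⟩|⟨i',t'⟩|⟨i',t'⟩|⟨j',t'⟩|⟨j',t'⟩|⟨j',t'⟩|⟨j',t'⟩|⟨lr',s',j'⟩ <;>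
    (try cases lr) <;> (try cases lr') <;> (try cases s) <;> (try cases s') <;>
    (try have hj : ((ep1 j : Fin n) : ℕ) < ((ep2 j : Fin n) : ℕ) := hlt j) <;>
    (try have hj' : ((ep1 j' : Fin n) : ℕ) < ((ep2 j' : Fin n) : ℕ) := hlt j') <;>
    (try have hcc : ((j : Fin m) : ℕ) = ((j' : Fin m) : ℕ) →
        ((ep1 j : Fin n) : ℕ) = ((ep1 j' : Fin n) : ℕ) ∧
          ((ep2 j : Fin n) : ℕ) = ((ep2 j' : Fin n) : ℕ) := fun h => by cases Fin.val_injective h; exact ⟨rfl, rfl⟩) <;>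
    (try simp only [ne_eq, RVert.vK1.injEq, RVert.vK2.injEq, RVert.vS1.injEq, RVert.vS2.injEq,
      RVert.eK1.injEq, RVert.eK2.injEq, RVert.eS1.injEq, RVert.eS2.injEq, RVert.link.injEq,
      Fin.ext_iff, not_and, Bool.false_eq_true, Bool.true_eq_false, true_and, false_and,
      and_true, and_false, not_false_iff, not_true] at huv) <;>
    simp only [radj, key1, key2, pgLex5, linkIdx, Fin.ext_iff, Fin.lt_def, Fin.le_def,
      Bool.toNat_true, Bool.toNat_false, if_true, if_false,
      Bool.false_eq_true, Bool.true_eq_false, and_true, and_false, true_and, false_and,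
      or_false, false_or] <;>
    (first | omega | (constructor <;> intro hiff <;> first | exact hiff.elim | omega))
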